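/- Let I, J ⊆ {1,...,r} with |I| = |J| = m and Σ an r×r positive definite matrix with C = I∩J, D = {1,...,r}\C, Ī = I\C, J̄ = J\C. Then det(Σ_{I×J})² = det(Σ_{C×C})² · det(Σ̄_{Ī×J̄})², where Σ̄ = Σ_{D×D} − Σ_{D×C}Σ_{C×C}^{-1}Σ_{C×D}. -/

import Mathlib

open Matrix Finset

private lemma posDef_submatrix_inj {n m : ℕ} {M : Matrix (Fin n) (Fin n) ℝ} (hM : M.PosDef)
    (e : Fin m → Fin n) (he : Function.Injective e) : (M.submatrix e e).PosDef := by
  classical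
  refine posDef_iff_dotProduct_mulVec.mpr ⟨?_, ?_⟩
  · have h1 := hM.1
    rw [Matrix.IsHermitian, conjTranspose_submatrix, h1]
  · intro x hx
    set y : Fin n → ℝ := fun i => ∑ a : Fin m, if e a = i then x a else 0 with hy
    have hsum : ∀ f : Fin n → ℝ, (∑ i, y i * f i) = ∑ a, x a * f (e a) := by
      intro f
      simp only [hy, Finset.sum_mul, ite_mul, zero_mul]
      rw [Finset.sum_comm]
      simp
    have hyea : ∀ a, y (e a) = x a := by
      intro a
      simp only [hy]
      rw [Finset.sum_eq_single a]
      · simp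
      · intro b _ hb
        simp [he.ne hb]
      · simp
    have hyne : y ≠ 0 := by
      intro h
      apply hx
      funext a
      have h2 := hyea a
      rw [h] at h2
      simpa using h2.symm
    have inner : ∀ i : Fin n, (∑ j, M i j * y j) = ∑ b, M i (e b) * x b := by
      intro i
      calc (∑ j, M i j * y j) = ∑ j, y j * M i j := by
            exact Finset.sum_congr rfl fun j _ => mul_comm _ _
        _ = ∑ b, x b * M i (e b) := hsum _
        _ = ∑ b, M i (e b) * x b := Finset.sum_congr rfl fun b _ => mul_comm _ _
    have key : star x ⬝ᵥ (M.submatrix e e) *ᵥ x = star y ⬝ᵥ M *ᵥ y := by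
      simp only [star_trivial, dotProduct, mulVec, submatrix_apply]
      rw [hsum (fun i => ∑ j, M i j * y j)]
      exact Finset.sum_congr rfl fun a _ => by rw [inner]
    rw [key]
    exact hM.dotProduct_mulVec_pos hyne

theorem sq_det_minor_eq_schur {r m c k : ℕ} (S : Matrix (Fin r) (Fin r) ℝ)
    (hpd : S.PosDef)
    (I J : Finset (Fin r)) (hI : I.card = m) (hJ : J.card = m)
    (hC : (I ∩ J).card = c)
    (hIb : (I \ (I ∩ J)).card = k) (hJb : (J \ (I ∩ J)).card = k)
    (SCC : Matrix (Fin c) (Fin c) ℝ)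
    (hSCC : SCC = Matrix.of fun a b =>
      S ((I ∩ J).orderIsoOfFin hC a : Fin r) ((I ∩ J).orderIsoOfFin hC b : Fin r))
    (N : Matrix (Fin r) (Fin r) ℝ)
    (hN : ∀ i j, N i j = S i j - ∑ a : Fin c, ∑ b : Fin c,
      S i ((I ∩ J).orderIsoOfFin hC a : Fin r) * SCC⁻¹ a b *
        S ((I ∩ J).orderIsoOfFin hC b : Fin r) j) :
    (Matrix.det (Matrix.of fun (a b : Fin m) =>
        S (I.orderIsoOfFin hI a : Fin r) (J.orderIsoOfFin hJ b : Fin r))) ^ 2 =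
      SCC.det ^ 2 * (Matrix.det (Matrix.of fun (a b : Fin k) =>
        N ((I \ (I ∩ J)).orderIsoOfFin hIb a : Fin r)
          ((J \ (I ∩ J)).orderIsoOfFin hJb b : Fin r))) ^ 2 := by
  classical
  set C : Finset (Fin r) := I ∩ J with hCdef
  have hCI : C ⊆ I := Finset.inter_subset_left
  have hCJ : C ⊆ J := Finset.inter_subset_right
  have hck : k + c = m := by
    have h := Finset.card_sdiff_add_card_eq_card hCI
    rw [hIb, hC, hI] at h; exact h
  set u : Fin c → Fin r := fun a => (C.orderIsoOfFin hC a : Fin r) with hu_def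
  set vI : Fin k → Fin r := fun a => ((I \ C).orderIsoOfFin hIb a : Fin r) with hvI_def
  set vJ : Fin k → Fin r := fun a => ((J \ C).orderIsoOfFin hJb a : Fin r) with hvJ_def
  have hu : Function.Injective u := fun a b h =>
    (C.orderIsoOfFin hC).injective (Subtype.ext h)
  have hvIi : Function.Injective vI := fun a b h =>
    ((I \ C).orderIsoOfFin hIb).injective (Subtype.ext h)
  have hvJi : Function.Injective vJ := fun a b h =>
    ((J \ C).orderIsoOfFin hJb).injective (Subtype.ext h)
  have huC : ∀ a, u a ∈ C := fun a => (C.orderIsoOfFin hC a).2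
  have hvII : ∀ a, vI a ∈ I \ C := fun a => ((I \ C).orderIsoOfFin hIb a).2
  have hvJJ : ∀ a, vJ a ∈ J \ C := fun a => ((J \ C).orderIsoOfFin hJb a).2
  set e : Fin c ⊕ Fin k → Fin r := Sum.elim u vI with he_def
  set f : Fin c ⊕ Fin k → Fin r := Sum.elim u vJ with hf_def
  -- bijection σ between Fin m and Fin c ⊕ Fin k matching I
  have hexI : ∀ a : Fin m, ∃ p, e p = (I.orderIsoOfFin hI a : Fin r) := by
    intro a
    have hxI : (I.orderIsoOfFin hI a : Fin r) ∈ I := (I.orderIsoOfFin hI a).2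
    by_cases hxC : (I.orderIsoOfFin hI a : Fin r) ∈ C
    · exact ⟨Sum.inl ((C.orderIsoOfFin hC).symm ⟨_, hxC⟩),
        congrArg Subtype.val ((C.orderIsoOfFin hC).apply_symm_apply ⟨_, hxC⟩)⟩
    · exact ⟨Sum.inr (((I \ C).orderIsoOfFin hIb).symm
        ⟨_, Finset.mem_sdiff.2 ⟨hxI, hxC⟩⟩),
        congrArg Subtype.val (((I \ C).orderIsoOfFin hIb).apply_symm_apply _)⟩
  have hexJ : ∀ a : Fin m, ∃ p, f p = (J.orderIsoOfFin hJ a : Fin r) := by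
    intro a
    have hxJ : (J.orderIsoOfFin hJ a : Fin r) ∈ J := (J.orderIsoOfFin hJ a).2
    by_cases hxC : (J.orderIsoOfFin hJ a : Fin r) ∈ C
    · exact ⟨Sum.inl ((C.orderIsoOfFin hC).symm ⟨_, hxC⟩),
        congrArg Subtype.val ((C.orderIsoOfFin hC).apply_symm_apply ⟨_, hxC⟩)⟩
    · exact ⟨Sum.inr (((J \ C).orderIsoOfFin hJb).symm
        ⟨_, Finset.mem_sdiff.2 ⟨hxJ, hxC⟩⟩),
        congrArg Subtype.val (((J \ C).orderIsoOfFin hJb).apply_symm_apply _)⟩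
  choose g hg using hexI
  choose g' hg' using hexJ
  have hginj : Function.Injective g := by
    intro a b hab
    have h2 : e (g a) = e (g b) := by rw [hab]
    rw [hg a, hg b] at h2
    exact (I.orderIsoOfFin hI).injective (Subtype.coe_injective h2)
  have hg'inj : Function.Injective g' := by
    intro a b hab
    have h2 : f (g' a) = f (g' b) := by rw [hab]
    rw [hg' a, hg' b] at h2
    exact (J.orderIsoOfFin hJ).injective (Subtype.coe_injective h2)
  have hcard : Fintype.card (Fin m) = Fintype.card (Fin c ⊕ Fin k) := by
    simp [Fintype.card_sum]; omega
  have hgbij : Function.Bijective g :=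
    (Fintype.bijective_iff_injective_and_card g).2 ⟨hginj, hcard⟩
  have hg'bij : Function.Bijective g' :=
    (Fintype.bijective_iff_injective_and_card g').2 ⟨hg'inj, hcard⟩
  set σ : Fin m ≃ (Fin c ⊕ Fin k) := Equiv.ofBijective g hgbij with hσdef
  set τ : Fin m ≃ (Fin c ⊕ Fin k) := Equiv.ofBijective g' hg'bij with hτdef
  have hσ : ∀ a, e (σ a) = (I.orderIsoOfFin hI a : Fin r) := hg
  have hτ : ∀ a, f (τ a) = (J.orderIsoOfFin hJ a : Fin r) := hg'
  -- block matrix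
  set B12 : Matrix (Fin c) (Fin k) ℝ := Matrix.of fun a b => S (u a) (vJ b) with hB12
  set B21 : Matrix (Fin k) (Fin c) ℝ := Matrix.of fun a b => S (vI a) (u b) with hB21
  set B22 : Matrix (Fin k) (Fin k) ℝ := Matrix.of fun a b => S (vI a) (vJ b) with hB22
  set Bk := Matrix.fromBlocks SCC B12 B21 B22 with hBkdef
  have hBk : ∀ p q, Bk p q = S (e p) (f q) := by
    rintro (a | a) (b | b) <;>
      simp [hBkdef, hB12, hB21, hB22, hSCC, he_def, hf_def] <;> rfl
  have hMeq : (Matrix.of fun (a b : Fin m) =>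
      S (I.orderIsoOfFin hI a : Fin r) (J.orderIsoOfFin hJ b : Fin r)) = Bk.submatrix σ τ := by
    funext a b
    rw [Matrix.submatrix_apply, hBk, hσ, hτ, Matrix.of_apply]
  -- invertibility of SCC
  have hSCCpd : SCC.PosDef := by
    have h2 : SCC = S.submatrix u u := by
      rw [hSCC]; rfl
    rw [h2]
    exact posDef_submatrix_inj hpd u hu
  haveI : Invertible SCC := hSCCpd.isUnit.invertible
  -- the Schur complement block equals the N-matrix
  have htriple : ∀ (X : Matrix (Fin k) (Fin c) ℝ) (Y : Matrix (Fin c) (Fin c) ℝ)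
      (Z : Matrix (Fin c) (Fin k) ℝ) (a b : Fin k),
      (X * Y * Z) a b = ∑ i, ∑ j, X a i * Y i j * Z j b := by
    intro X Y Z a b
    simp only [Matrix.mul_apply, Finset.sum_mul]
    rw [Finset.sum_comm]
  have hSchur : B22 - B21 * ⅟SCC * B12 =
      Matrix.of fun (a b : Fin k) => N (vI a) (vJ b) := by
    rw [invOf_eq_nonsing_inv]
    funext a b
    rw [Matrix.sub_apply, htriple, Matrix.of_apply, hN]
    simp [hB22, hB21, hB12, hu_def]
    rfl
  have hdetBk : Bk.det = SCC.det *
      (Matrix.of fun (a b : Fin k) => N (vI a) (vJ b)).det := by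
    rw [hBkdef, Matrix.det_fromBlocks₁₁, hSchur]
  -- permutation argument
  set π : Equiv.Perm (Fin m) := τ.trans σ.symm with hπdef
  have hsub : Bk.submatrix σ τ = (Bk.submatrix σ σ).submatrix id π := by
    funext a b
    simp [hπdef, Matrix.submatrix_apply]
  have hdetM : (Matrix.of fun (a b : Fin m) =>
      S (I.orderIsoOfFin hI a : Fin r) (J.orderIsoOfFin hJ b : Fin r)).det =
      (Equiv.Perm.sign π : ℝ) * Bk.det := by
    rw [hMeq, hsub, Matrix.det_permute', Matrix.det_submatrix_equiv_self]
  rw [hdetM, hdetBk]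
  have hsign : ((Equiv.Perm.sign π : ℤ) : ℝ) ^ 2 = 1 := by
    rcases Int.units_eq_one_or (Equiv.Perm.sign π) with h | h <;> rw [h] <;> norm_num
  rw [mul_pow, mul_pow, hsign, one_mul]
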